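/- If every entry of an n×n nonnegative matrix function M(θ) is a log-convex function of θ ∈ ℝ (where zero entries are allowed, interpreted as log-convex), then θ ↦ spr(M(θ)) is log-convex, hence convex. -/

import Mathlib

open Matrix Filter Topology Finset

/-- Spectral radius of a real square matrix. -/
noncomputable def Matrix.sprad {s : ℕ} (A : Matrix (Fin s) (Fin s) ℝ) : ℝ :=
  sSup ((fun (μ : ℂ) => ‖μ‖) '' spectrum ℂ (A.map Complex.ofReal))

attribute [local instance] Matrix.linftyOpNormedRing Matrix.linftyOpNormedAlgebra

namespace KingmanAux

/-- Two-term Hölder inequality for sums. -/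
lemma holder_sum {m : Type*} [Fintype m] {l : ℝ} (hl0 : 0 < l) (hl1 : l < 1)
    (f g : m → ℝ) (hf : ∀ i, 0 ≤ f i) (hg : ∀ i, 0 ≤ g i) :
    ∑ i, (f i) ^ l * (g i) ^ (1 - l) ≤ (∑ i, f i) ^ l * (∑ i, g i) ^ (1 - l) := by
  have hl1' : 0 < 1 - l := by linarith
  have hpq : Real.HolderConjugate (1 / l) (1 / (1 - l)) := by
    constructor
    · rw [one_div, one_div, inv_inv, inv_inv, inv_one]; ring
    · exact one_div_pos.mpr hl0
    · exact one_div_pos.mpr hl1'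
  have h := Real.inner_le_Lp_mul_Lq (Finset.univ : Finset m)
    (fun i => (f i) ^ l) (fun i => (g i) ^ (1 - l)) hpq
  simp only [abs_of_nonneg (Real.rpow_nonneg (hf _) _),
    abs_of_nonneg (Real.rpow_nonneg (hg _) _)] at h
  have e1 : ∀ i : m, ((f i) ^ l) ^ (1 / l) = f i := fun i => by
    rw [← Real.rpow_mul (hf i), mul_one_div_cancel hl0.ne', Real.rpow_one]
  have e2 : ∀ i : m, ((g i) ^ (1 - l)) ^ (1 / (1 - l)) = g i := fun i => by
    rw [← Real.rpow_mul (hg i), mul_one_div_cancel hl1'.ne', Real.rpow_one]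
  simp only [e1, e2, one_div_one_div] at h
  exact h

variable {n : ℕ}

lemma pow_entry_nonneg {A : Matrix (Fin n) (Fin n) ℝ} (hA : ∀ i j, 0 ≤ A i j) (k : ℕ) :
    ∀ i j, 0 ≤ (A ^ k) i j := by
  induction k with
  | zero =>
    intro i j
    simp only [pow_zero, Matrix.one_apply]
    split <;> norm_num
  | succ k ih =>
    intro i j
    rw [pow_succ, Matrix.mul_apply]
    exact Finset.sum_nonneg fun m _ => mul_nonneg (ih i m) (hA m j)

/-- Kingman's entrywise inequality for powers. -/
lemma pow_entry_le {A B C : Matrix (Fin n) (Fin n) ℝ} {l : ℝ} (hl0 : 0 < l) (hl1 : l < 1)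
    (hA : ∀ i j, 0 ≤ A i j) (hB : ∀ i j, 0 ≤ B i j) (hC : ∀ i j, 0 ≤ C i j)
    (hABC : ∀ i j, A i j ≤ (B i j) ^ l * (C i j) ^ (1 - l)) (k : ℕ) :
    ∀ i j, (A ^ k) i j ≤ ((B ^ k) i j) ^ l * ((C ^ k) i j) ^ (1 - l) := by
  induction k with
  | zero =>
    intro i j
    simp only [pow_zero, Matrix.one_apply]
    by_cases h : i = j
    · simp [h, Real.one_rpow]
    · simp [h, Real.zero_rpow hl0.ne', Real.zero_rpow (by linarith : (1 : ℝ) - l ≠ 0)]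
  | succ k ih =>
    intro i j
    rw [pow_succ, pow_succ, pow_succ, Matrix.mul_apply, Matrix.mul_apply, Matrix.mul_apply]
    calc ∑ m, (A ^ k) i m * A m j
        ≤ ∑ m, ((B ^ k) i m * B m j) ^ l * ((C ^ k) i m * C m j) ^ (1 - l) := by
          refine Finset.sum_le_sum fun m _ => ?_
          have h1 : (A ^ k) i m * A m j ≤
              (((B ^ k) i m) ^ l * ((C ^ k) i m) ^ (1 - l)) *
                ((B m j) ^ l * (C m j) ^ (1 - l)) :=
            mul_le_mul (ih i m) (hABC m j) (hA m j)
              (mul_nonneg (Real.rpow_nonneg (pow_entry_nonneg hB k i m) _)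
                (Real.rpow_nonneg (pow_entry_nonneg hC k i m) _))
          refine h1.trans (le_of_eq ?_)
          rw [Real.mul_rpow (pow_entry_nonneg hB k i m) (hB m j),
            Real.mul_rpow (pow_entry_nonneg hC k i m) (hC m j)]
          ring
      _ ≤ (∑ m, (B ^ k) i m * B m j) ^ l * (∑ m, (C ^ k) i m * C m j) ^ (1 - l) :=
          holder_sum hl0 hl1 _ _
            (fun m => mul_nonneg (pow_entry_nonneg hB k i m) (hB m j))
            (fun m => mul_nonneg (pow_entry_nonneg hC k i m) (hC m j))

lemma rowsum_le_norm (A : Matrix (Fin n) (Fin n) ℝ) (i : Fin n) :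
    ∑ j, |A i j| ≤ ‖A‖ := by
  rw [Matrix.linfty_opNorm_def]
  have : (∑ j, ‖A i j‖₊) ≤ (Finset.univ : Finset (Fin n)).sup fun i => ∑ j, ‖A i j‖₊ :=
    Finset.le_sup (f := fun i => ∑ j, ‖A i j‖₊) (Finset.mem_univ i)
  calc ∑ j, |A i j| = ((∑ j, ‖A i j‖₊ : NNReal) : ℝ) := by
        push_cast
        simp [Real.norm_eq_abs]
      _ ≤ _ := by exact_mod_cast this

lemma norm_le_of_rowsum {A : Matrix (Fin n) (Fin n) ℝ} {c : ℝ} (hc : 0 ≤ c)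
    (h : ∀ i, ∑ j, |A i j| ≤ c) : ‖A‖ ≤ c := by
  rw [Matrix.linfty_opNorm_def, ← Real.coe_toNNReal c hc, NNReal.coe_le_coe]
  refine Finset.sup_le fun i _ => ?_
  rw [← NNReal.coe_le_coe, Real.coe_toNNReal c hc]
  calc ((∑ j, ‖A i j‖₊ : NNReal) : ℝ) = ∑ j, |A i j| := by
        push_cast
        simp [Real.norm_eq_abs]
      _ ≤ c := h i

lemma norm_pow_le {A B C : Matrix (Fin n) (Fin n) ℝ} {l : ℝ} (hl0 : 0 < l) (hl1 : l < 1)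
    (hA : ∀ i j, 0 ≤ A i j) (hB : ∀ i j, 0 ≤ B i j) (hC : ∀ i j, 0 ≤ C i j)
    (hABC : ∀ i j, A i j ≤ (B i j) ^ l * (C i j) ^ (1 - l)) (k : ℕ) :
    ‖A ^ k‖ ≤ ‖B ^ k‖ ^ l * ‖C ^ k‖ ^ (1 - l) := by
  refine norm_le_of_rowsum
    (mul_nonneg (Real.rpow_nonneg (norm_nonneg _) _) (Real.rpow_nonneg (norm_nonneg _) _))
    fun i => ?_
  calc ∑ j, |(A ^ k) i j| = ∑ j, (A ^ k) i j := by
        refine Finset.sum_congr rfl fun j _ => abs_of_nonneg (pow_entry_nonneg hA k i j)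
    _ ≤ ∑ j, ((B ^ k) i j) ^ l * ((C ^ k) i j) ^ (1 - l) :=
        Finset.sum_le_sum fun j _ => pow_entry_le hl0 hl1 hA hB hC hABC k i j
    _ ≤ (∑ j, (B ^ k) i j) ^ l * (∑ j, (C ^ k) i j) ^ (1 - l) :=
        holder_sum hl0 hl1 _ _ (fun j => pow_entry_nonneg hB k i j)
          (fun j => pow_entry_nonneg hC k i j)
    _ ≤ ‖B ^ k‖ ^ l * ‖C ^ k‖ ^ (1 - l) := by
        refine mul_le_mul (Real.rpow_le_rpow (Finset.sum_nonneg fun j _ =>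
            pow_entry_nonneg hB k i j) ?_ hl0.le)
          (Real.rpow_le_rpow (Finset.sum_nonneg fun j _ => pow_entry_nonneg hC k i j) ?_
            (by linarith))
          (Real.rpow_nonneg (Finset.sum_nonneg fun j _ => pow_entry_nonneg hC k i j) _)
          (Real.rpow_nonneg (norm_nonneg _) _)
        · calc ∑ j, (B ^ k) i j = ∑ j, |(B ^ k) i j| :=
              (Finset.sum_congr rfl fun j _ => (abs_of_nonneg (pow_entry_nonneg hB k i j)).symm)
            _ ≤ ‖B ^ k‖ := rowsum_le_norm _ i
        · calc ∑ j, (C ^ k) i j = ∑ j, |(C ^ k) i j| :=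
              (Finset.sum_congr rfl fun j _ => (abs_of_nonneg (pow_entry_nonneg hC k i j)).symm)
            _ ≤ ‖C ^ k‖ := rowsum_le_norm _ i

lemma norm_map_ofReal (A : Matrix (Fin n) (Fin n) ℝ) :
    ‖A.map Complex.ofReal‖ = ‖A‖ := by
  rw [Matrix.linfty_opNorm_def, Matrix.linfty_opNorm_def]
  congr 1
  refine Finset.sup_congr rfl fun i _ => ?_
  refine Finset.sum_congr rfl fun j _ => ?_
  simp [Matrix.map_apply]

lemma map_ofReal_pow (A : Matrix (Fin n) (Fin n) ℝ) (k : ℕ) :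
    (A.map Complex.ofReal) ^ k = (A ^ k).map Complex.ofReal := by
  have : ∀ B : Matrix (Fin n) (Fin n) ℝ,
      B.map Complex.ofReal = Complex.ofRealHom.mapMatrix B := fun B => rfl
  rw [this, this, ← map_pow]

lemma sprad_nonneg (A : Matrix (Fin n) (Fin n) ℝ) : 0 ≤ A.sprad :=
  Real.sSup_nonneg fun x hx => by
    obtain ⟨μ, -, rfl⟩ := hx
    exact norm_nonneg μ

/-- Gelfand's formula in terms of `Matrix.sprad`. -/
lemma tendsto_sprad (A : Matrix (Fin n) (Fin n) ℝ) :
    Tendsto (fun k : ℕ => ‖A ^ k‖ ^ (1 / (k : ℝ))) atTop (𝓝 A.sprad) := by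
  set B := A.map Complex.ofReal with hB
  set R := spectralRadius ℂ B with hR
  -- R is finite
  have hRle : R ≤ ENNReal.ofReal (‖B‖ * ‖(1 : Matrix (Fin n) (Fin n) ℂ)‖) := by
    refine iSup₂_le fun μ hμ => ?_
    rw [← ENNReal.ofReal_coe_nnreal, coe_nnnorm]
    exact ENNReal.ofReal_le_ofReal (spectrum.norm_le_norm_mul_of_mem hμ)
  have hRtop : R ≠ ⊤ := ne_top_of_le_ne_top ENNReal.ofReal_ne_top hRle
  -- identify R.toReal with sprad
  have hS : ∀ x ∈ (fun (μ : ℂ) => ‖μ‖) '' spectrum ℂ B,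
      x ≤ ‖B‖ * ‖(1 : Matrix (Fin n) (Fin n) ℂ)‖ := by
    rintro x ⟨μ, hμ, rfl⟩
    show ‖μ‖ ≤ _
    exact spectrum.norm_le_norm_mul_of_mem hμ
  have hbdd : BddAbove ((fun (μ : ℂ) => ‖μ‖) '' spectrum ℂ B) := ⟨_, hS⟩
  have key : R.toReal = A.sprad := by
    rcases Set.eq_empty_or_nonempty (spectrum ℂ B) with hσ | hσ
    · have h1 : R = 0 := by
        rw [hR, spectralRadius, hσ]
        simp
      rw [Matrix.sprad, hσ]
      simp [h1]
    · refine le_antisymm ?_ ?_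
      · refine ENNReal.toReal_le_of_le_ofReal
          (Real.sSup_nonneg fun x hx => by
            obtain ⟨μ, -, rfl⟩ := hx; exact norm_nonneg μ) ?_
        refine iSup₂_le fun μ hμ => ?_
        rw [← ENNReal.ofReal_coe_nnreal, coe_nnnorm]
        refine ENNReal.ofReal_le_ofReal ?_
        exact le_csSup hbdd ⟨μ, hμ, rfl⟩
      · refine csSup_le (hσ.image _) ?_
        rintro x ⟨μ, hμ, rfl⟩
        have h1 : (‖μ‖₊ : ENNReal) ≤ R :=
          le_iSup₂ (f := fun (μ : ℂ) (_ : μ ∈ spectrum ℂ B) => (‖μ‖₊ : ENNReal)) μ hμ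
        have h2 := ENNReal.toReal_mono hRtop h1
        rwa [ENNReal.coe_toReal, coe_nnnorm] at h2
  have hG := spectrum.pow_nnnorm_pow_one_div_tendsto_nhds_spectralRadius B
  have hT : Tendsto (fun k : ℕ => (((‖B ^ k‖₊ : ENNReal) ^ (1 / (k : ℝ)))).toReal)
      atTop (𝓝 R.toReal) := (ENNReal.tendsto_toReal hRtop).comp hG
  rw [key] at hT
  refine hT.congr fun k => ?_
  rw [← ENNReal.toReal_rpow, ENNReal.coe_toReal, coe_nnnorm,
    map_ofReal_pow, norm_map_ofReal]

/-- Kingman's inequality for the spectral radius, strict-interior case. -/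
lemma sprad_le {A B C : Matrix (Fin n) (Fin n) ℝ} {l : ℝ} (hl0 : 0 < l) (hl1 : l < 1)
    (hA : ∀ i j, 0 ≤ A i j) (hB : ∀ i j, 0 ≤ B i j) (hC : ∀ i j, 0 ≤ C i j)
    (hABC : ∀ i j, A i j ≤ (B i j) ^ l * (C i j) ^ (1 - l)) :
    A.sprad ≤ B.sprad ^ l * C.sprad ^ (1 - l) := by
  have tA := tendsto_sprad A
  have tB := tendsto_sprad B
  have tC := tendsto_sprad C
  have tG : Tendsto (fun k : ℕ => (‖B ^ k‖ ^ (1 / (k : ℝ))) ^ l *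
      (‖C ^ k‖ ^ (1 / (k : ℝ))) ^ (1 - l)) atTop (𝓝 (B.sprad ^ l * C.sprad ^ (1 - l))) :=
    (tB.rpow_const (Or.inr hl0.le)).mul (tC.rpow_const (Or.inr (by linarith)))
  refine le_of_tendsto_of_tendsto' tA tG fun k => ?_
  have hk : (0 : ℝ) ≤ 1 / (k : ℝ) := by positivity
  calc ‖A ^ k‖ ^ (1 / (k : ℝ))
      ≤ (‖B ^ k‖ ^ l * ‖C ^ k‖ ^ (1 - l)) ^ (1 / (k : ℝ)) :=
        Real.rpow_le_rpow (norm_nonneg _) (norm_pow_le hl0 hl1 hA hB hC hABC k) hk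
    _ = (‖B ^ k‖ ^ (1 / (k : ℝ))) ^ l * (‖C ^ k‖ ^ (1 / (k : ℝ))) ^ (1 - l) := by
        rw [Real.mul_rpow (Real.rpow_nonneg (norm_nonneg _) _)
          (Real.rpow_nonneg (norm_nonneg _) _),
          ← Real.rpow_mul (norm_nonneg _), ← Real.rpow_mul (norm_nonneg _),
          ← Real.rpow_mul (norm_nonneg _), ← Real.rpow_mul (norm_nonneg _),
          mul_comm l (1 / (k : ℝ)), mul_comm (1 - l) (1 / (k : ℝ))]

end KingmanAux

open KingmanAux

/-- (Kingman) If every entry of a nonnegative matrix function `M(θ)` is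
log-convex in `θ` (zero entries allowed, in the multiplicative-inequality
sense), then the spectral radius `θ ↦ spr(M(θ))` is log-convex, hence convex. -/
theorem stmt5 {n : ℕ} (M : ℝ → Matrix (Fin n) (Fin n) ℝ)
    (hnn : ∀ θ i j, 0 ≤ M θ i j)
    (hlc : ∀ (i j : Fin n) (θ₁ θ₂ l : ℝ), 0 ≤ l → l ≤ 1 →
      M (l * θ₁ + (1 - l) * θ₂) i j ≤ (M θ₁ i j) ^ l * (M θ₂ i j) ^ (1 - l)) :
    (∀ (θ₁ θ₂ l : ℝ), 0 ≤ l → l ≤ 1 →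
      (M (l * θ₁ + (1 - l) * θ₂)).sprad ≤
        (M θ₁).sprad ^ l * (M θ₂).sprad ^ (1 - l)) ∧
    ConvexOn ℝ Set.univ (fun θ => (M θ).sprad) := by
  have main : ∀ (θ₁ θ₂ l : ℝ), 0 ≤ l → l ≤ 1 →
      (M (l * θ₁ + (1 - l) * θ₂)).sprad ≤
        (M θ₁).sprad ^ l * (M θ₂).sprad ^ (1 - l) := by
    intro θ₁ θ₂ l hl0 hl1
    rcases hl0.eq_or_lt with h0 | h0
    · subst h0
      rw [show (0 : ℝ) * θ₁ + (1 - 0) * θ₂ = θ₂ by ring]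
      rw [Real.rpow_zero, sub_zero, Real.rpow_one, one_mul]
    · rcases hl1.eq_or_lt with h1 | h1
      · subst h1
        rw [show (1 : ℝ) * θ₁ + (1 - 1) * θ₂ = θ₁ by ring]
        rw [Real.rpow_one, sub_self, Real.rpow_zero, mul_one]
      · exact sprad_le h0 h1 (hnn _) (hnn _) (hnn _)
          (fun i j => hlc i j θ₁ θ₂ l hl0 hl1)
  refine ⟨main, ⟨convex_univ, ?_⟩⟩
  intro x _ y _ a b ha hb hab
  have hb' : b = 1 - a := by linarith
  subst hb'
  calc (M (a • x + (1 - a) • y)).sprad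
      = (M (a * x + (1 - a) * y)).sprad := by norm_num
    _ ≤ (M x).sprad ^ a * (M y).sprad ^ (1 - a) := main x y a ha (by linarith)
    _ ≤ a * (M x).sprad + (1 - a) * (M y).sprad :=
        Real.geom_mean_le_arith_mean2_weighted ha hb (sprad_nonneg _) (sprad_nonneg _)
          (by ring)
    _ = a • (M x).sprad + (1 - a) • (M y).sprad := by norm_num
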